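/- Let a, b : ℕ → ℂ satisfy a(m) ≪_ε m^ε and b(m) ≪_ε m^ε for every ε > 0, and suppose that for every ε > 0, Σ_{p ≤ e^x} |a(p²) − b(p²)|² (log p)/p ≪_ε exp(ε x / log x) for all x ≥ 2. Then for every ε > 0, uniformly in real μ ≥ 3, L ≥ 3 and T ≥ 1, ∫_T^{2T} | Σ_p (a(p²) − b(p²)) p^{−1−2it} g_μ(2 (log p)/L) log p |² dt ≪_ε T + exp(ε L / log L), where the sum is over primes p (the sum is finite since g_μ is supported in [−1, 1], so only p ≤ e^{L/2} contribute). -/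

import Mathlib

open Complex MeasureTheory Real Filter
open scoped ENNReal NNReal ENat

noncomputable section

/-- The function `g_μ`: a normalized multiple of `(1-x²)^{μ-1/2}` on `[-1,1]`. -/
def gmu (μ : ℝ) (x : ℝ) : ℝ :=
  if |x| ≤ 1 then
    2 ^ (2 * μ) * Real.Gamma (μ + 1) ^ 2 / (π * Real.sqrt μ * Real.Gamma (2 * μ + 1))
      * (1 - x ^ 2) ^ (μ - 1 / 2)
  else 0

/-- The Fourier transform `h_μ(t) = ∫ g_μ(x) e^{ixt} dx`. -/
def hmu (μ : ℝ) (t : ℝ) : ℂ :=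
  ∫ x : ℝ, (gmu μ x : ℂ) * Complex.exp (x * t * Complex.I)

/-- The constant `C_μ = Γ(μ+1) 2^μ / √μ`. -/
def Cmu (μ : ℝ) : ℝ := Real.Gamma (μ + 1) * 2 ^ μ / Real.sqrt μ

/-- `E_μ(T) = C_μ / T + 1`. -/
def Emu (μ T : ℝ) : ℝ := Cmu μ / T + 1

/-- `∑_{p ≤ e^x} |a(p²) − b(p²)|² (log p)/p`, the sum running over primes. -/
def primeSquareSum (a b : ℕ → ℂ) (x : ℝ) : ℝ :=
  ∑ p ∈ (Finset.range (⌈Real.exp x⌉₊ + 1)).filter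
      (fun p => Nat.Prime p ∧ (p : ℝ) ≤ Real.exp x),
    ‖a (p ^ 2) - b (p ^ 2)‖ ^ 2 * Real.log p / p

open scoped Classical in
/-- The weighted Dirichlet polynomial `∑_p (a(p²) − b(p²)) p^{−1−2it} g_μ(2 log p / L) log p`;
since `g_μ` is supported in `[−1,1]` only the primes `p ≤ e^{L/2}` contribute. -/
def primeDirichletPoly (a b : ℕ → ℂ) (μ L t : ℝ) : ℂ :=
  ∑' p : ℕ, if Nat.Prime p then
      (a (p ^ 2) - b (p ^ 2)) * (p : ℂ) ^ (-(1 : ℂ) - 2 * Complex.I * (t : ℂ))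
        * (gmu μ (2 * Real.log p / L) : ℂ) * (Real.log p : ℂ)
    else 0

/-! ### Auxiliary lemmas -/

section Aux

lemma MVB.sum_range_inv_le (N : ℕ) : ∑ q ∈ Finset.range (N+1), (1:ℝ)/q ≤ 1 + Real.log N := by
  induction N with
  | zero => simp
  | succ n ih =>
    rw [Finset.sum_range_succ]
    rcases Nat.eq_zero_or_pos n with hn | hn
    · subst hn; norm_num
    · have h1 : Real.log ((n:ℝ)/((n:ℝ)+1)) ≤ (n:ℝ)/((n:ℝ)+1) - 1 := by
        apply Real.log_le_sub_one_of_pos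
        positivity
      have h2 : Real.log ((n:ℝ)/((n:ℝ)+1)) = Real.log n - Real.log ((n:ℝ)+1) := by
        rw [Real.log_div (by positivity) (by positivity)]
      have h3 : (n:ℝ)/((n:ℝ)+1) - 1 = -(1/((n:ℝ)+1)) := by field_simp; ring
      have h4 : (1:ℝ)/((n:ℕ)+1:ℕ) ≤ Real.log ((n:ℝ)+1) - Real.log n := by
        push_cast
        rw [h2, h3] at h1
        linarith
      have hc : ((n+1:ℕ):ℝ) = (n:ℝ)+1 := by push_cast; ring
      rw [hc] at h4 ⊢
      push_cast at h4 ⊢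
      linarith

lemma MVB.sum_finset_inv_le {N : ℕ} (F : Finset ℕ) (hF : ∀ q ∈ F, q ≤ N) :
    ∑ q ∈ F, (1:ℝ)/q ≤ 1 + Real.log N := by
  refine le_trans ?_ (MVB.sum_range_inv_le N)
  apply Finset.sum_le_sum_of_subset_of_nonneg
  · intro q hq; exact Finset.mem_range.2 (Nat.lt_succ_of_le (hF q hq))
  · intro i _ _; positivity

lemma MVB.inv_sqrt_mul_sqrt_le {A B : ℝ} (hA : 0 < A) (hB : 0 < B) :
    1/(Real.sqrt A * Real.sqrt B) ≤ 1/(2*A) + 1/(2*B) := by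
  have h1 : Real.sqrt A * Real.sqrt B * (Real.sqrt A * Real.sqrt B) = A * B := by
    rw [mul_mul_mul_comm, Real.mul_self_sqrt hA.le, Real.mul_self_sqrt hB.le]
  have h2 : Real.sqrt A * Real.sqrt B ≤ (A+B)/2 := by
    nlinarith [sq_nonneg (Real.sqrt A - Real.sqrt B), Real.sq_sqrt hA.le, Real.sq_sqrt hB.le]
  have h3 : 0 < Real.sqrt A * Real.sqrt B := by positivity
  rw [div_add_div _ _ (by positivity) (by positivity), div_le_div_iff₀ h3 (by positivity)]
  nlinarith [h1, h2, h3]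

lemma MVB.sqrt_add_le (x y : ℝ) (hx : 0 ≤ x) (hy : 0 ≤ y) :
    Real.sqrt (x + y) ≤ Real.sqrt x + Real.sqrt y := by
  have h : x + y ≤ (Real.sqrt x + Real.sqrt y)^2 := by
    nlinarith [Real.sq_sqrt hx, Real.sq_sqrt hy, Real.sqrt_nonneg x, Real.sqrt_nonneg y]
  calc Real.sqrt (x+y) ≤ Real.sqrt ((Real.sqrt x + Real.sqrt y)^2) := Real.sqrt_le_sqrt h
    _ = Real.sqrt x + Real.sqrt y := Real.sqrt_sq (by positivity)

lemma MVB.amgm_of_sq {A B s : ℝ} (hA : 0 ≤ A) (hB : 0 ≤ B) (hs : 0 ≤ s)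
    (h : A * B = s^2) : s ≤ (A+B)/2 := by
  nlinarith [sq_nonneg (A - B), sq_nonneg (A + B - 2*s)]

lemma MVB.logdiv_sqrt (lg Q d : ℝ) (hQ : 0 < Q) (hd : 0 < d) :
    (lg/Q) * (Real.sqrt Q/Real.sqrt d) = lg * (1/(Real.sqrt Q * Real.sqrt d)) := by
  have hq' : Real.sqrt Q * Real.sqrt Q = Q := Real.mul_self_sqrt hQ.le
  have h1 : Real.sqrt Q ≠ 0 := by positivity
  have h2 : Real.sqrt d ≠ 0 := by positivity
  have hQ0 : Q ≠ 0 := ne_of_gt hQ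
  field_simp
  linear_combination lg * hq'

/-- `log b − log a ≥ (b−a)/b` for `0 < a < b`. -/
lemma MVB.loggap {x y : ℝ} (hx : 0 < x) (hxy : x < y) :
    (y - x)/y ≤ Real.log y - Real.log x := by
  have hy : 0 < y := lt_trans hx hxy
  have h1 : Real.log (x/y) ≤ x/y - 1 := Real.log_le_sub_one_of_pos (by positivity)
  have h2 : Real.log (x/y) = Real.log x - Real.log y := Real.log_div hx.ne' hy.ne'
  have h3 : x/y - 1 = -((y-x)/y) := by field_simp; ring
  rw [h2, h3] at h1
  linarith

def Rfun (p q : ℕ) : ℝ := (max (p:ℝ) (q:ℝ)) / (max (p:ℝ) (q:ℝ) - min (p:ℝ) (q:ℝ))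

lemma Rfun_symm (p q : ℕ) : Rfun p q = Rfun q p := by
  unfold Rfun; rw [max_comm, min_comm]

end Aux


section Aux2

lemma gmu_const_le_one {μ : ℝ} (hμ : 3 ≤ μ) :
    2 ^ (2 * μ) * Real.Gamma (μ + 1) ^ 2 / (π * Real.sqrt μ * Real.Gamma (2 * μ + 1)) ≤ 1 := by
  have hμ0 : (0:ℝ) < μ := by linarith
  have hG1 : 0 < Real.Gamma (μ + 1) := Real.Gamma_pos_of_pos (by linarith)
  have hGh : 0 < Real.Gamma (μ + 1/2) := Real.Gamma_pos_of_pos (by linarith)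
  have hG2 : 0 < Real.Gamma (2*μ + 1) := Real.Gamma_pos_of_pos (by linarith)
  have hπ : (0:ℝ) < π := Real.pi_pos
  -- duplication formula at s = μ + 1/2
  have hdup := Real.Gamma_mul_Gamma_add_half (μ + 1/2)
  have e1 : μ + 1/2 + 1/2 = μ + 1 := by ring
  have e2 : 2*(μ + 1/2) = 2*μ + 1 := by ring
  rw [e1] at hdup
  -- hdup : Γ(μ+1/2) * Γ(μ+1) = Γ(2μ+1) * 2^(1 - (2μ+1)) * √π
  rw [e2] at hdup
  -- log-convexity: Γ(μ+1) ≤ Γ(μ+1/2) * √(μ+1/2)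
  have hconv : Real.Gamma (μ+1) ≤ Real.Gamma (μ+1/2) * Real.sqrt (μ+1/2) := by
    have hcx := Real.convexOn_log_Gamma.2 (Set.mem_Ioi.2 (show (0:ℝ) < μ+1/2 by linarith))
      (Set.mem_Ioi.2 (show (0:ℝ) < μ+3/2 by linarith)) (by norm_num : (0:ℝ) ≤ 1/2)
      (by norm_num : (0:ℝ) ≤ 1/2) (by norm_num)
    have emid : (1/2:ℝ) • (μ+1/2) + (1/2:ℝ) • (μ+3/2) = μ + 1 := by
      simp [smul_eq_mul]; ring
    rw [emid] at hcx
    simp only [Function.comp_apply, smul_eq_mul] at hcx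
    have hG3 : 0 < Real.Gamma (μ+3/2) := Real.Gamma_pos_of_pos (by linarith)
    have hstep : Real.Gamma (μ+3/2) = (μ+1/2) * Real.Gamma (μ+1/2) := by
      have := Real.Gamma_add_one (s := μ+1/2) (by positivity)
      rw [show μ+1/2+1 = μ+3/2 by ring] at this
      exact this
    have hrhs : 1/2 * Real.log (Real.Gamma (μ+1/2)) + 1/2 * Real.log (Real.Gamma (μ+3/2))
        = Real.log (Real.Gamma (μ+1/2) * Real.sqrt (μ+1/2)) := by
      rw [hstep, Real.log_mul (by positivity) hGh.ne',
        Real.log_mul hGh.ne' (by positivity : Real.sqrt (μ+1/2) ≠ 0),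
        Real.log_sqrt (by positivity)]
      ring
    rw [hrhs] at hcx
    have := Real.exp_le_exp.2 hcx
    rwa [Real.exp_log hG1, Real.exp_log (by positivity)] at this
  -- now: const = Γ(μ+1)/(√π √μ Γ(μ+1/2)) after using hdup
  have h2pow : (0:ℝ) < 2 ^ (2*μ) := by positivity
  have hsqπ : 0 < Real.sqrt π := Real.sqrt_pos.2 hπ
  have hsqμ : 0 < Real.sqrt μ := Real.sqrt_pos.2 hμ0
  rw [div_le_one (by positivity)]
  -- Γ(2μ+1) = Γ(μ+1/2)Γ(μ+1) 2^(2μ)/√π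
  have hG2eq : Real.Gamma (2*μ+1) = Real.Gamma (μ+1/2) * Real.Gamma (μ+1) * 2^(2*μ) / Real.sqrt π := by
    rw [hdup]
    rw [show (1:ℝ) - (2*μ+1) = -(2*μ) by ring, Real.rpow_neg (by norm_num : (0:ℝ) ≤ 2)]
    field_simp
    try ring
  rw [hG2eq]
  have key : Real.Gamma (μ+1) * Real.sqrt π ≤ π * Real.sqrt μ * Real.Gamma (μ+1/2) := by
    calc Real.Gamma (μ+1) * Real.sqrt π
        ≤ (Real.Gamma (μ+1/2) * Real.sqrt (μ+1/2)) * Real.sqrt π := by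
          apply mul_le_mul_of_nonneg_right hconv hsqπ.le
      _ ≤ π * Real.sqrt μ * Real.Gamma (μ+1/2) := by
          have h1 : Real.sqrt (μ+1/2) * Real.sqrt π ≤ π * Real.sqrt μ := by
            have : Real.sqrt (μ+1/2) ≤ Real.sqrt π * Real.sqrt μ := by
              rw [← Real.sqrt_mul hπ.le]
              apply Real.sqrt_le_sqrt
              nlinarith [Real.pi_gt_three]
            calc Real.sqrt (μ+1/2) * Real.sqrt π ≤ (Real.sqrt π * Real.sqrt μ) * Real.sqrt π :=
                  mul_le_mul_of_nonneg_right this hsqπ.le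
              _ = (Real.sqrt π * Real.sqrt π) * Real.sqrt μ := by ring
              _ = π * Real.sqrt μ := by rw [Real.mul_self_sqrt hπ.le]
          calc Real.Gamma (μ+1/2) * Real.sqrt (μ+1/2) * Real.sqrt π
              = (Real.sqrt (μ+1/2) * Real.sqrt π) * Real.Gamma (μ+1/2) := by ring
            _ ≤ (π * Real.sqrt μ) * Real.Gamma (μ+1/2) :=
                mul_le_mul_of_nonneg_right h1 hGh.le
  calc 2 ^ (2*μ) * Real.Gamma (μ+1) ^ 2
      = (Real.Gamma (μ+1) * Real.sqrt π) * (Real.Gamma (μ+1) * 2^(2*μ) / Real.sqrt π) := by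
        field_simp
    _ ≤ (π * Real.sqrt μ * Real.Gamma (μ+1/2)) * (Real.Gamma (μ+1) * 2^(2*μ) / Real.sqrt π) := by
        apply mul_le_mul_of_nonneg_right key (by positivity)
    _ = π * Real.sqrt μ * (Real.Gamma (μ+1/2) * Real.Gamma (μ+1) * 2^(2*μ) / Real.sqrt π) := by
        ring

lemma gmu_nonneg {μ : ℝ} (hμ : 3 ≤ μ) (x : ℝ) : 0 ≤ gmu μ x := by
  unfold gmu
  split_ifs with h
  · have hx : x^2 ≤ 1 := by nlinarith [abs_nonneg x, _root_.sq_abs x, abs_le.1 h]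
    have := Real.Gamma_pos_of_pos (show (0:ℝ) < μ+1 by linarith)
    have := Real.Gamma_pos_of_pos (show (0:ℝ) < 2*μ+1 by linarith)
    have hμ0 : (0:ℝ) < μ := by linarith
    have := Real.pi_pos
    have h1 : (0:ℝ) ≤ 1 - x^2 := by linarith
    positivity
  · exact le_refl 0

lemma gmu_le_one {μ : ℝ} (hμ : 3 ≤ μ) (x : ℝ) : gmu μ x ≤ 1 := by
  unfold gmu
  split_ifs with h
  · have hx : x^2 ≤ 1 := by nlinarith [_root_.sq_abs x, abs_le.1 h, abs_nonneg x]
    have h1 : (0:ℝ) ≤ 1 - x^2 := by linarith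
    have h2 : (1 - x^2 : ℝ) ≤ 1 := by nlinarith [sq_nonneg x]
    have h3 : (1 - x^2 : ℝ) ^ (μ - 1/2) ≤ 1 :=
      Real.rpow_le_one h1 h2 (by linarith)
    have h4 : (0:ℝ) ≤ (1 - x^2 : ℝ) ^ (μ - 1/2) := Real.rpow_nonneg h1 _
    calc 2 ^ (2 * μ) * Real.Gamma (μ + 1) ^ 2 / (π * Real.sqrt μ * Real.Gamma (2 * μ + 1))
          * (1 - x ^ 2) ^ (μ - 1 / 2)
        ≤ 1 * 1 := by
          apply mul_le_mul (gmu_const_le_one hμ) h3 h4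
          norm_num
      _ = 1 := by norm_num
  · norm_num


lemma expcmp {ε : ℝ} (hε : 0 < ε) : ∃ K₂ : ℝ, 0 < K₂ ∧ ∀ L : ℝ, 3 ≤ L →
    L^4 * Real.exp ((ε/4) * (max (L/2) 2) / Real.log (max (L/2) 2))
      ≤ K₂ * Real.exp (ε * L / Real.log L) := by
  set s : ℝ := Real.sqrt (128/(3*ε)) with hs_def
  have hs : 0 < s := Real.sqrt_pos.2 (by positivity)
  have hs2 : s^2 = 128/(3*ε) := Real.sq_sqrt (by positivity)
  refine ⟨Real.exp ((32/3)*s + ε), Real.exp_pos _, ?_⟩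
  intro L hL
  have hL0 : (0:ℝ) < L := by linarith
  have hL1 : (1:ℝ) < L := by linarith
  have hlogL : 0 < Real.log L := Real.log_pos hL1
  set x := max (L/2) 2 with hx_def
  have hx2 : (2:ℝ) ≤ x := le_max_right _ _
  have hlogx : 0 < Real.log x := Real.log_pos (by linarith)
  -- step 1
  have step1 : (ε/4) * x / Real.log x ≤ (ε/2) * (L / Real.log L) + ε := by
    rcases le_or_gt 4 L with h4 | h4
    · have hxeq : x = L/2 := max_eq_left (by linarith)
      have hlog2 : Real.log x = Real.log L - Real.log 2 := by
        rw [hxeq, Real.log_div (by linarith) (by norm_num)]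
      have hL4 : Real.log 4 ≤ Real.log L := Real.log_le_log (by norm_num) h4
      have h42 : Real.log 4 = 2 * Real.log 2 := by
        rw [show (4:ℝ) = 2^2 by norm_num, Real.log_pow]; push_cast; ring
      have hhalf : Real.log L / 2 ≤ Real.log x := by
        rw [hlog2]; nlinarith
      have hxL : x / Real.log x ≤ L / Real.log L := by
        rw [div_le_div_iff₀ hlogx hlogL]
        nlinarith [hhalf, hL0, hlogL]
      have h1 : (ε/4) * x / Real.log x = (ε/4) * (x / Real.log x) := by ring
      rw [h1]
      have h2 : (ε/4) * (x / Real.log x) ≤ (ε/4) * (L / Real.log L) :=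
        mul_le_mul_of_nonneg_left hxL (by positivity)
      have h3 : (0:ℝ) ≤ L / Real.log L := by positivity
      nlinarith
    · have hxeq : x = 2 := max_eq_right (by linarith)
      have hlog2 : (0.6931471803:ℝ) < Real.log 2 := Real.log_two_gt_d9
      have h1 : (ε/4) * x / Real.log x ≤ ε := by
        have hl2 : (0:ℝ) < Real.log 2 := by linarith
        rw [hxeq, div_le_iff₀ hl2]
        nlinarith
      have h3 : (0:ℝ) ≤ (ε/2) * (L / Real.log L) := by positivity
      linarith
  -- step 2
  set u : ℝ := L ^ ((1:ℝ)/4) with hu_def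
  have hu : 0 < u := Real.rpow_pos_of_pos hL0 _
  have hlogu : Real.log L ≤ 4 * u := by
    have := Real.log_le_rpow_div hL0.le (show (0:ℝ) < 1/4 by norm_num)
    calc Real.log L ≤ L ^ ((1:ℝ)/4) / (1/4) := this
      _ = 4 * u := by rw [hu_def]; ring
  have hu4 : u^(4:ℕ) = L := by
    rw [hu_def, ← Real.rpow_natCast (L ^ ((1:ℝ)/4)) 4, ← Real.rpow_mul hL0.le]
    norm_num
  have hLlog : u^3/4 ≤ L / Real.log L := by
    have h1 : L / (4*u) ≤ L / Real.log L :=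
      div_le_div_of_nonneg_left hL0.le hlogL hlogu
    have h2 : L / (4*u) = u^3/4 := by
      rw [← hu4]; field_simp
    linarith
  have key : 16*u ≤ (ε/8)*u^3 + (32/3)*s := by
    have hcube : 0 ≤ (u-s)^2 * (u+2*s) := by positivity
    have hexp : (u-s)^2*(u+2*s) = u^3 - 3*s^2*u + 2*s^3 := by ring
    rw [hexp] at hcube
    have h3s2 : 3*s^2 = 128/ε := by rw [hs2]; field_simp
    -- u^3 + 2 s^3 ≥ (128/ε) u
    have h1 : (128/ε)*u ≤ u^3 + 2*s^3 := by nlinarith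
    -- multiply by ε/128… and (ε/4)s^3 = (32/3)s
    have h2 : (ε/4)*s^3 = (32/3)*s := by
      have : s^3 = s^2 * s := by ring
      rw [this, hs2]; field_simp; ring
    have h1' := mul_le_mul_of_nonneg_left h1 (show (0:ℝ) ≤ ε/8 by positivity)
    have e1 : (ε/8)*((128/ε)*u) = 16*u := by field_simp; ring
    have e2 : (ε/8)*(u^3+2*s^3) = (ε/8)*u^3 + (32/3)*s := by
      rw [mul_add]
      have : (ε/8)*(2*s^3) = (ε/4)*s^3 := by ring
      rw [this, h2]
    rw [e1, e2] at h1'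
    linarith
  have step2 : 4*Real.log L + ε ≤ ((32/3)*s + ε) + (ε/2) * (L / Real.log L) := by
    have h1 : 4*Real.log L ≤ 16*u := by linarith
    have h2 : (ε/8)*u^3 ≤ (ε/2) * (L / Real.log L) := by
      have := mul_le_mul_of_nonneg_left hLlog (show (0:ℝ) ≤ ε/2 by positivity)
      calc (ε/8)*u^3 = (ε/2) * (u^3/4) := by ring
        _ ≤ (ε/2) * (L / Real.log L) := this
    linarith
  -- combine
  have hL4exp : L^4 = Real.exp (4 * Real.log L) := by
    rw [show (4:ℝ) * Real.log L = (4:ℕ) * Real.log L by norm_num, Real.exp_nat_mul,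
      Real.exp_log hL0]
  calc L^4 * Real.exp ((ε/4) * x / Real.log x)
      = Real.exp (4*Real.log L + (ε/4) * x / Real.log x) := by
        rw [Real.exp_add, hL4exp]
    _ ≤ Real.exp (((32/3)*s + ε) + ε * L / Real.log L) := by
        apply Real.exp_le_exp.2
        have : ε * L / Real.log L = (ε/2) * (L/Real.log L) + (ε/2) * (L/Real.log L) := by
          field_simp; ring
        rw [this]
        linarith [step1, step2]
    _ = Real.exp ((32/3)*s + ε) * Real.exp (ε * L / Real.log L) := by rw [Real.exp_add]


lemma norm_exp_ofReal_mul_I (θ t : ℝ) : ‖Complex.exp ((θ:ℂ) * (t:ℂ) * Complex.I)‖ = 1 := by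
  rw [Complex.norm_exp]
  have : ((θ:ℂ) * (t:ℂ) * Complex.I).re = 0 := by simp
  rw [this, Real.exp_zero]

lemma qnorm_le_T {T θ : ℝ} (hT : 0 ≤ T) :
    ‖∫ t in T..(2*T), Complex.exp ((θ:ℂ) * (t:ℂ) * Complex.I)‖ ≤ T := by
  have h := intervalIntegral.norm_integral_le_of_norm_le_const
    (C := 1) (f := fun t : ℝ => Complex.exp ((θ:ℂ) * (t:ℂ) * Complex.I))
    (a := T) (b := 2*T) (fun x _ => le_of_eq (norm_exp_ofReal_mul_I θ x))
  calc ‖∫ t in T..(2*T), Complex.exp ((θ:ℂ) * (t:ℂ) * Complex.I)‖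
      ≤ 1 * |2*T - T| := h
    _ = T := by rw [one_mul, show 2*T - T = T by ring, _root_.abs_of_nonneg hT]

lemma qnorm_le_inv {T θ : ℝ} (hθ : θ ≠ 0) :
    ‖∫ t in T..(2*T), Complex.exp ((θ:ℂ) * (t:ℂ) * Complex.I)‖ ≤ 2/|θ| := by
  have hc : ((θ:ℂ) * Complex.I) ≠ 0 := by
    simp [Complex.ofReal_ne_zero.2 hθ, Complex.I_ne_zero]
  have hre : ∀ s : ℝ, (∫ t in T..(2*T), Complex.exp ((θ:ℂ) * (t:ℂ) * Complex.I))
      = (Complex.exp ((θ:ℂ)*Complex.I*(2*T:ℝ)) - Complex.exp ((θ:ℂ)*Complex.I*(T:ℝ)))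
        / ((θ:ℂ)*Complex.I) := by
    intro s
    rw [← integral_exp_mul_complex hc]
    congr 1
    funext t
    congr 1
    ring
  rw [hre 0]
  rw [norm_div]
  have h1 : ‖Complex.exp ((θ:ℂ)*Complex.I*((2*T:ℝ):ℂ))‖ = 1 := by
    have := norm_exp_ofReal_mul_I θ (2*T)
    rw [← this]; congr 2; ring
  have h2 : ‖Complex.exp ((θ:ℂ)*Complex.I*((T:ℝ):ℂ))‖ = 1 := by
    have := norm_exp_ofReal_mul_I θ T
    rw [← this]; congr 2; ring
  have h3 : ‖(θ:ℂ)*Complex.I‖ = |θ| := by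
    rw [norm_mul, Complex.norm_real, Real.norm_eq_abs,
      Complex.norm_I, mul_one]
  rw [h3]
  have h4 : ‖Complex.exp ((θ:ℂ)*Complex.I*((2*T:ℝ):ℂ)) - Complex.exp ((θ:ℂ)*Complex.I*((T:ℝ):ℂ))‖ ≤ 2 := by
    calc ‖Complex.exp ((θ:ℂ)*Complex.I*((2*T:ℝ):ℂ)) - Complex.exp ((θ:ℂ)*Complex.I*((T:ℝ):ℂ))‖
        ≤ ‖Complex.exp ((θ:ℂ)*Complex.I*((2*T:ℝ):ℂ))‖ + ‖Complex.exp ((θ:ℂ)*Complex.I*((T:ℝ):ℂ))‖ :=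
          norm_sub_le _ _
      _ = 2 := by rw [h1, h2]; norm_num
  exact (div_le_div_iff_of_pos_right (abs_pos.2 hθ)).2 h4


lemma phase_mul_conj (x y t : ℝ) :
    Complex.exp (((-2*x : ℝ):ℂ) * (t:ℂ) * Complex.I)
      * (starRingEnd ℂ) (Complex.exp (((-2*y : ℝ):ℂ) * (t:ℂ) * Complex.I))
    = Complex.exp (((2*(y - x) : ℝ):ℂ) * (t:ℂ) * Complex.I) := by
  rw [← Complex.exp_conj, ← Complex.exp_add]
  congr 1
  simp only [map_mul, Complex.conj_ofReal, Complex.conj_I]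
  push_cast
  ring

lemma cpow_prime_eq {p : ℕ} (hp : 0 < p) (t : ℝ) :
    (p : ℂ) ^ (-(1 : ℂ) - 2 * Complex.I * (t : ℂ))
      = ((1/(p:ℝ) : ℝ):ℂ) * Complex.exp (((-2*Real.log p : ℝ):ℂ) * (t:ℂ) * Complex.I) := by
  have hp0 : (0:ℝ) < (p:ℝ) := by exact_mod_cast hp
  have hne : (p : ℂ) ≠ 0 := by
    simp only [ne_eq, Nat.cast_eq_zero]
    omega
  rw [Complex.cpow_def_of_ne_zero hne]
  have hlog : Complex.log ((p:ℕ):ℂ) = ((Real.log p : ℝ):ℂ) := by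
    rw [show ((p:ℕ):ℂ) = (((p:ℝ)):ℂ) by push_cast; rfl]
    rw [← Complex.ofReal_log hp0.le]
  rw [hlog]
  have hsplit : ((Real.log p : ℝ):ℂ) * (-(1:ℂ) - 2*Complex.I*(t:ℂ))
      = ((-Real.log p : ℝ):ℂ) + ((-2*Real.log p : ℝ):ℂ) * (t:ℂ) * Complex.I := by
    push_cast
    ring
  rw [hsplit, Complex.exp_add]
  congr 1
  rw [← Complex.ofReal_exp]
  norm_cast
  rw [Real.exp_neg, Real.exp_log hp0]
  rw [one_div]


lemma inner_sum_bound {S : Finset ℕ} {N : ℕ} {L : ℝ} (hL : 3 ≤ L)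
    (hS : ∀ q ∈ S, 2 ≤ q ∧ q ≤ N ∧ Real.log q ≤ L/2) (hN : Real.log N ≤ L)
    {p : ℕ} (hp : p ∈ S) :
    ∑ q ∈ S, (Real.log q / q) * Real.sqrt (Rfun p q) ≤ 8*L^2 := by
  set f : ℕ → ℝ := fun q => (Real.log q / q) * Real.sqrt (Rfun p q) with hf
  have hp2 : 2 ≤ p := (hS p hp).1
  have hp0 : (0:ℝ) < p := by
    have : 0 < p := by omega
    exact_mod_cast this
  have hL0 : (0:ℝ) < L := by linarith
  have hstep : ∑ q ∈ S, f q ≤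
      (∑ q ∈ S.filter (fun q => q < p), f q) + (∑ q ∈ S.filter (fun q => p < q), f q) := by
    rw [Finset.sum_filter, Finset.sum_filter, ← Finset.sum_add_distrib]
    apply Finset.sum_le_sum
    intro q hq
    rcases lt_trichotomy q p with h | h | h
    · rw [if_pos h, if_neg (by omega)]; simp
    · have hfq : f q = 0 := by
        have hR0 : Rfun p q = 0 := by
          unfold Rfun; rw [h]; simp
        simp only [hf, hR0, Real.sqrt_zero, mul_zero]
      rw [hfq, if_neg (by omega), if_neg (by omega)]
      norm_num
    · rw [if_neg (by omega), if_pos h]; simp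
  have hinvq : ∀ (F : Finset ℕ), F ⊆ S → ∑ q ∈ F, 1/(q:ℝ) ≤ 1 + Real.log N :=
    fun F hFS => MVB.sum_finset_inv_le F (fun q hq => (hS q (hFS hq)).2.1)
  have hlogNnn : 0 ≤ 1 + Real.log N := by
    have h2N : 2 ≤ N := le_trans (hS p hp).1 (hS p hp).2.1
    have h1N : (1:ℝ) ≤ N := by exact_mod_cast Nat.one_le_of_lt h2N
    have := Real.log_nonneg h1N
    linarith
  -- q > p part
  have hgt : ∑ q ∈ S.filter (fun q => p < q), f q ≤ L * (1 + Real.log N) := by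
    set F := S.filter (fun q => p < q) with hF
    have hterm : ∀ q ∈ F, f q ≤ (L/2)*(1/(q:ℝ)) + (L/2)*(1/((q:ℝ) - (p:ℝ))) := by
      intro q hq
      obtain ⟨hqS, hpq⟩ := Finset.mem_filter.1 hq
      obtain ⟨hq2, hqN, hqlog⟩ := hS q hqS
      have hq0 : (0:ℝ) < q := by
        have : 0 < q := by omega
        exact_mod_cast this
      have hpq' : (p:ℝ) < (q:ℝ) := by exact_mod_cast hpq
      have hd0 : (0:ℝ) < (q:ℝ) - p := by linarith
      have hsq : Real.sqrt (Rfun p q) = Real.sqrt q / Real.sqrt ((q:ℝ)-p) := by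
        unfold Rfun
        rw [max_eq_right hpq'.le, min_eq_left hpq'.le, Real.sqrt_div hq0.le]
      have hlognn : 0 ≤ Real.log q := Real.log_nonneg (by exact_mod_cast Nat.one_le_of_lt hq2)
      have hlogle : Real.log q ≤ L := by linarith
      have key : f q = Real.log q * (1/(Real.sqrt q * Real.sqrt ((q:ℝ)-p))) := by
        rw [hf]; simp only []
        rw [hsq, MVB.logdiv_sqrt _ _ _ hq0 hd0]
      rw [key]
      have hh := MVB.inv_sqrt_mul_sqrt_le hq0 hd0
      calc Real.log q * (1/(Real.sqrt q * Real.sqrt ((q:ℝ)-p)))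
          ≤ L * (1/(Real.sqrt q * Real.sqrt ((q:ℝ)-p))) :=
            mul_le_mul_of_nonneg_right hlogle (by positivity)
        _ ≤ L * (1/(2*(q:ℝ)) + 1/(2*((q:ℝ) - (p:ℝ)))) :=
            mul_le_mul_of_nonneg_left hh (by linarith)
        _ = (L/2)*(1/(q:ℝ)) + (L/2)*(1/((q:ℝ) - (p:ℝ))) := by
            have hqne : (q:ℝ) ≠ 0 := ne_of_gt hq0
            have hdne : (q:ℝ) - (p:ℝ) ≠ 0 := ne_of_gt hd0
            field_simp
    have himg : ∑ q ∈ F, 1/((q:ℝ) - (p:ℝ)) = ∑ k ∈ F.image (fun q => q - p), 1/(k:ℝ) := by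
      rw [Finset.sum_image ?inj]
      case inj =>
        intro x hx y hy hxy
        have hx' := (Finset.mem_filter.1 hx).2
        have hy' := (Finset.mem_filter.1 hy).2
        dsimp only at hxy
        omega
      apply Finset.sum_congr rfl
      intro q hq
      have hpq := (Finset.mem_filter.1 hq).2
      rw [Nat.cast_sub (le_of_lt hpq)]
    have hbd1 : ∑ q ∈ F, 1/(q:ℝ) ≤ 1 + Real.log N := hinvq F (Finset.filter_subset _ _)
    have hbd2 : ∑ q ∈ F, 1/((q:ℝ) - (p:ℝ)) ≤ 1 + Real.log N := by
      rw [himg]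
      apply MVB.sum_finset_inv_le
      intro k hk
      obtain ⟨q, hq, rfl⟩ := Finset.mem_image.1 hk
      have := (hS q (Finset.filter_subset _ _ hq)).2.1
      omega
    calc ∑ q ∈ F, f q ≤ ∑ q ∈ F, ((L/2)*(1/(q:ℝ)) + (L/2)*(1/((q:ℝ) - (p:ℝ)))) :=
          Finset.sum_le_sum hterm
      _ = (L/2)*(∑ q ∈ F, 1/(q:ℝ)) + (L/2)*(∑ q ∈ F, 1/((q:ℝ) - (p:ℝ))) := by
          rw [Finset.sum_add_distrib, Finset.mul_sum, Finset.mul_sum]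
      _ ≤ (L/2)*(1 + Real.log N) + (L/2)*(1 + Real.log N) := by
          apply add_le_add
          · exact mul_le_mul_of_nonneg_left hbd1 (by linarith)
          · exact mul_le_mul_of_nonneg_left hbd2 (by linarith)
      _ = L * (1 + Real.log N) := by ring
  -- q < p part
  have hlt : ∑ q ∈ S.filter (fun q => q < p), f q ≤ 2 * L * (1 + Real.log N) := by
    set F := S.filter (fun q => q < p) with hF
    have hterm : ∀ q ∈ F, f q ≤ (3*L/2)*(1/(q:ℝ)) + (L/2)*(1/((p:ℝ) - (q:ℝ))) := by
      intro q hq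
      obtain ⟨hqS, hqp⟩ := Finset.mem_filter.1 hq
      obtain ⟨hq2, hqN, hqlog⟩ := hS q hqS
      have hq0 : (0:ℝ) < q := by
        have : 0 < q := by omega
        exact_mod_cast this
      have hqp' : (q:ℝ) < (p:ℝ) := by exact_mod_cast hqp
      have hd0 : (0:ℝ) < (p:ℝ) - q := by linarith
      have hsqd : 0 < Real.sqrt ((p:ℝ)-q) := Real.sqrt_pos.2 hd0
      have hlognn : 0 ≤ Real.log q := Real.log_nonneg (by exact_mod_cast Nat.one_le_of_lt hq2)
      have hlogle : Real.log q ≤ L := by linarith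
      have hsq : Real.sqrt (Rfun p q) = Real.sqrt p / Real.sqrt ((p:ℝ)-q) := by
        unfold Rfun
        rw [max_eq_left hqp'.le, min_eq_right hqp'.le, Real.sqrt_div hp0.le]
      have hadd : Real.sqrt (p:ℝ) ≤ Real.sqrt q + Real.sqrt ((p:ℝ)-q) := by
        have e : (p:ℝ) = (q:ℝ) + ((p:ℝ) - q) := by ring
        calc Real.sqrt (p:ℝ) = Real.sqrt ((q:ℝ) + ((p:ℝ) - q)) := by rw [← e]
          _ ≤ Real.sqrt q + Real.sqrt ((p:ℝ)-q) := MVB.sqrt_add_le _ _ hq0.le hd0.le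
      have step1 : f q ≤ (Real.log q / q) * ((Real.sqrt q + Real.sqrt ((p:ℝ)-q)) / Real.sqrt ((p:ℝ)-q)) := by
        rw [hf]; simp only []
        rw [hsq]
        apply mul_le_mul_of_nonneg_left _ (by positivity)
        exact (div_le_div_iff_of_pos_right hsqd).2 hadd
      have step2 : (Real.log q / q) * ((Real.sqrt q + Real.sqrt ((p:ℝ)-q)) / Real.sqrt ((p:ℝ)-q))
          = Real.log q * (1/(Real.sqrt q * Real.sqrt ((p:ℝ)-q))) + Real.log q * (1/(q:ℝ)) := by
        rw [add_div, mul_add, MVB.logdiv_sqrt _ _ _ hq0 hd0, div_self (ne_of_gt hsqd)]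
        ring
      have hh := MVB.inv_sqrt_mul_sqrt_le hq0 hd0
      calc f q ≤ (Real.log q / q) * ((Real.sqrt q + Real.sqrt ((p:ℝ)-q)) / Real.sqrt ((p:ℝ)-q)) := step1
        _ = Real.log q * (1/(Real.sqrt q * Real.sqrt ((p:ℝ)-q))) + Real.log q * (1/(q:ℝ)) := step2
        _ ≤ L * (1/(2*(q:ℝ)) + 1/(2*((p:ℝ) - (q:ℝ)))) + L * (1/(q:ℝ)) := by
            apply add_le_add
            · calc Real.log q * (1/(Real.sqrt q * Real.sqrt ((p:ℝ)-q)))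
                  ≤ L * (1/(Real.sqrt q * Real.sqrt ((p:ℝ)-q))) :=
                    mul_le_mul_of_nonneg_right hlogle (by positivity)
                _ ≤ L * (1/(2*(q:ℝ)) + 1/(2*((p:ℝ) - (q:ℝ)))) :=
                    mul_le_mul_of_nonneg_left hh (by linarith)
            · apply mul_le_mul_of_nonneg_right hlogle (by positivity)
        _ = (3*L/2)*(1/(q:ℝ)) + (L/2)*(1/((p:ℝ) - (q:ℝ))) := by
            have hqne : (q:ℝ) ≠ 0 := ne_of_gt hq0
            have hdne : (p:ℝ) - (q:ℝ) ≠ 0 := ne_of_gt hd0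
            field_simp
            ring
    have himg : ∑ q ∈ F, 1/((p:ℝ) - (q:ℝ)) = ∑ k ∈ F.image (fun q => p - q), 1/(k:ℝ) := by
      rw [Finset.sum_image ?inj]
      case inj =>
        intro x hx y hy hxy
        have hx' := (Finset.mem_filter.1 hx).2
        have hy' := (Finset.mem_filter.1 hy).2
        dsimp only at hxy
        omega
      apply Finset.sum_congr rfl
      intro q hq
      have hqp := (Finset.mem_filter.1 hq).2
      rw [Nat.cast_sub (le_of_lt hqp)]
    have hbd1 : ∑ q ∈ F, 1/(q:ℝ) ≤ 1 + Real.log N := hinvq F (Finset.filter_subset _ _)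
    have hbd2 : ∑ q ∈ F, 1/((p:ℝ) - (q:ℝ)) ≤ 1 + Real.log N := by
      rw [himg]
      apply MVB.sum_finset_inv_le
      intro k hk
      obtain ⟨q, hq, rfl⟩ := Finset.mem_image.1 hk
      have := (hS p hp).2.1
      omega
    calc ∑ q ∈ F, f q ≤ ∑ q ∈ F, ((3*L/2)*(1/(q:ℝ)) + (L/2)*(1/((p:ℝ) - (q:ℝ)))) :=
          Finset.sum_le_sum hterm
      _ = (3*L/2)*(∑ q ∈ F, 1/(q:ℝ)) + (L/2)*(∑ q ∈ F, 1/((p:ℝ) - (q:ℝ))) := by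
          rw [Finset.sum_add_distrib, Finset.mul_sum, Finset.mul_sum]
      _ ≤ (3*L/2)*(1 + Real.log N) + (L/2)*(1 + Real.log N) := by
          apply add_le_add
          · exact mul_le_mul_of_nonneg_left hbd1 (by linarith)
          · exact mul_le_mul_of_nonneg_left hbd2 (by linarith)
      _ = 2 * L * (1 + Real.log N) := by ring
  -- combine
  have hNL : Real.log N ≤ L := hN
  calc ∑ q ∈ S, f q ≤ (∑ q ∈ S.filter (fun q => q < p), f q)
        + (∑ q ∈ S.filter (fun q => p < q), f q) := hstep
    _ ≤ 2 * L * (1 + Real.log N) + L * (1 + Real.log N) := add_le_add hlt hgt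
    _ = 3 * L * (1 + Real.log N) := by ring
    _ ≤ 8 * L^2 := by nlinarith [hlogNnn]


end Aux2


set_option maxHeartbeats 2000000 in
/-- Under the Ramanujan hypothesis for `a, b` and the hypothesis
`∑_{p ≤ e^x} |a(p²) − b(p²)|² (log p)/p ≪_ε exp(ε x / log x)`, one has the mean value
bound `∫_T^{2T} |∑_p (a(p²) − b(p²)) p^{−1−2it} g_μ(2 log p / L) log p|² dt
≪_ε T + exp(ε L / log L)`, uniformly in `μ ≥ 3`, `L ≥ 3`, `T ≥ 1`. -/
theorem mean_value_bound (a b : ℕ → ℂ)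
    (ha : ∀ ε : ℝ, 0 < ε → ∃ C : ℝ, ∀ m : ℕ, 1 ≤ m →
      ‖a m‖ ≤ C * (m : ℝ) ^ ε)
    (hb : ∀ ε : ℝ, 0 < ε → ∃ C : ℝ, ∀ m : ℕ, 1 ≤ m →
      ‖b m‖ ≤ C * (m : ℝ) ^ ε)
    (hsq : ∀ ε : ℝ, 0 < ε → ∃ K : ℝ, ∀ x : ℝ, 2 ≤ x →
      primeSquareSum a b x ≤ K * Real.exp (ε * x / Real.log x)) :
    ∀ ε : ℝ, 0 < ε → ∃ K : ℝ, ∀ μ L T : ℝ, 3 ≤ μ → 3 ≤ L → 1 ≤ T →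
      (∫ t in T..(2 * T), ‖primeDirichletPoly a b μ L t‖ ^ 2)
        ≤ K * (T + Real.exp (ε * L / Real.log L)) := by
  intro ε hε
  obtain ⟨Ca, hCa⟩ := ha (1/8) (by norm_num)
  obtain ⟨Cb, hCb⟩ := hb (1/8) (by norm_num)
  obtain ⟨K₁, hK₁⟩ := hsq (ε/8) (by positivity)
  obtain ⟨K₂, hK₂0, hK₂⟩ := expcmp hε
  set C : ℝ := |Ca| + |Cb| with hCdef
  have hC0 : 0 ≤ C := by positivity
  set Z : ℝ := ∑' n : ℕ, 1/(n:ℝ)^((5:ℝ)/4) with hZdef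
  have hZsum : Summable (fun n : ℕ => 1/(n:ℝ)^((5:ℝ)/4)) :=
    Real.summable_one_div_nat_rpow.2 (by norm_num)
  have hZ0 : 0 ≤ Z := tsum_nonneg (fun n => by positivity)
  refine ⟨64*C^2*Z + 1 + 32*K₁^2*K₂, ?_⟩
  intro μ L T hμ hL hT
  have hT0 : (0:ℝ) < T := by linarith
  have hL0 : (0:ℝ) < L := by linarith
  set P : ℝ := Real.exp (L/2) with hPdef
  have hP1 : (1:ℝ) ≤ P := Real.one_le_exp (by linarith)
  set N : ℕ := ⌈P⌉₊ with hNdef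
  set S : Finset ℕ := (Finset.range (N+1)).filter (fun p => Nat.Prime p ∧ (p:ℝ) ≤ P)
    with hSdef
  set c : ℕ → ℂ := fun p => a (p^2) - b (p^2) with hcdef
  set d : ℕ → ℂ :=
    fun p => c p * ((gmu μ (2*Real.log p/L) : ℝ) : ℂ) * ((Real.log p / p : ℝ) : ℂ) with hddef
  -- membership facts
  have hSfact : ∀ p ∈ S, Nat.Prime p ∧ (p:ℝ) ≤ P ∧ 2 ≤ p ∧ p ≤ N ∧ Real.log p ≤ L/2 := by
    intro p hp
    obtain ⟨hrange, hprime, hle⟩ := Finset.mem_filter.1 hp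
    have hp2 : 2 ≤ p := hprime.two_le
    refine ⟨hprime, hle, hp2, Nat.lt_succ_iff.1 (Finset.mem_range.1 hrange), ?_⟩
    calc Real.log p ≤ Real.log P := Real.log_le_log (by positivity) hle
      _ = L/2 := Real.log_exp _
  have hSprop : ∀ q ∈ S, 2 ≤ q ∧ q ≤ N ∧ Real.log q ≤ L/2 := by
    intro q hq
    obtain ⟨_, _, h2, hN', hlog⟩ := hSfact q hq
    exact ⟨h2, hN', hlog⟩
  have hlogN : Real.log N ≤ L := by
    have hN1 : 1 ≤ N := Nat.one_le_ceil_iff.2 (by positivity)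
    have hN0 : (0:ℝ) < N := by exact_mod_cast hN1
    rw [Real.log_le_iff_le_exp hN0]
    have h1 : (N:ℝ) ≤ P + 1 := (Nat.ceil_lt_add_one (by positivity)).le
    have hP2 : (2:ℝ) ≤ P := by
      have h := Real.add_one_le_exp (L/2)
      rw [hPdef]
      nlinarith
    have h2 : P + 1 ≤ P * P := by nlinarith
    have h3 : P * P = Real.exp L := by
      rw [hPdef, ← Real.exp_add]; congr 1; ring
    linarith
  -- gmu facts
  have hg0 : ∀ x, 0 ≤ gmu μ x := gmu_nonneg hμ
  have hg1 : ∀ x, gmu μ x ≤ 1 := gmu_le_one hμ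
  -- Step A: the polynomial is a finite sum
  set D : ℝ → ℂ :=
    fun t => ∑ p ∈ S, d p * Complex.exp (((-2*Real.log p : ℝ):ℂ) * (t:ℂ) * Complex.I) with hDdef
  have hpoly : ∀ t : ℝ, primeDirichletPoly a b μ L t = D t := by
    intro t
    unfold primeDirichletPoly
    rw [tsum_eq_sum (s := S) ?vanish, hDdef]
    case vanish =>
      intro p hpS
      by_cases hprime : Nat.Prime p
      · rw [if_pos hprime]
        have hgt : P < (p:ℝ) := by
          by_contra hle'
          push_neg at hle'
          apply hpS
          rw [hSdef]
          refine Finset.mem_filter.2 ⟨Finset.mem_range.2 ?_, hprime, hle'⟩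
          have h1 : (p:ℝ) ≤ (N:ℝ) := le_trans hle' (Nat.le_ceil P)
          have h2 : p ≤ N := by exact_mod_cast h1
          omega
        have hgmu0 : gmu μ (2*Real.log p/L) = 0 := by
          unfold gmu
          rw [if_neg]
          rw [not_le]
          have hp0 : (0:ℝ) < (p:ℝ) := by
            have := hprime.pos
            exact_mod_cast this
          have hlogp : L/2 < Real.log p := (Real.lt_log_iff_exp_lt hp0).2 hgt
          have h1 : 1 < 2*Real.log p/L := by
            rw [lt_div_iff₀ hL0]; linarith
          calc (1:ℝ) < 2*Real.log p/L := h1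
            _ ≤ |2*Real.log p/L| := le_abs_self _
        rw [hgmu0]
        simp
      · rw [if_neg hprime]
    apply Finset.sum_congr rfl
    intro p hp
    obtain ⟨hprime, hle, hp2, hpN, hplog⟩ := hSfact p hp
    rw [if_pos hprime, cpow_prime_eq hprime.pos t]
    simp only [hddef, hcdef]
    push_cast
    ring
  -- the kernels
  set E : ℕ → ℕ → ℝ → ℂ :=
    fun p q t => Complex.exp (((2*(Real.log q - Real.log p) : ℝ):ℂ) * (t:ℂ) * Complex.I)
    with hEdef
  set Q : ℕ → ℕ → ℂ := fun p q => ∫ t in T..(2*T), E p q t with hQdef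
  have hDconj : ∀ t : ℝ, ((‖D t‖^2 : ℝ) : ℂ)
      = ∑ p ∈ S, ∑ q ∈ S, (d p * (starRingEnd ℂ) (d q)) * E p q t := by
    intro t
    have h1 : ((‖D t‖^2 : ℝ):ℂ) = D t * (starRingEnd ℂ) (D t) := by
      rw [Complex.sq_norm]
      exact (Complex.mul_conj _).symm
    rw [h1, hDdef]
    simp only []
    rw [map_sum, Finset.sum_mul_sum]
    apply Finset.sum_congr rfl
    intro p _
    apply Finset.sum_congr rfl
    intro q _
    rw [map_mul, mul_mul_mul_comm]
    congr 1
    rw [hEdef]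
    exact phase_mul_conj (Real.log p) (Real.log q) t
  have hcont : ∀ p q : ℕ, Continuous (fun t : ℝ => (d p * (starRingEnd ℂ) (d q)) * E p q t) := by
    intro p q
    apply continuous_const.mul
    apply Complex.continuous_exp.comp
    exact (continuous_const.mul Complex.continuous_ofReal).mul continuous_const
  have hnn : 0 ≤ ∫ t in T..(2*T), ‖D t‖^2 :=
    intervalIntegral.integral_nonneg (by linarith) (fun u _ => by positivity)
  have hcast : ((∫ t in T..(2*T), ‖D t‖^2 : ℝ):ℂ)
      = ∑ p ∈ S, ∑ q ∈ S, (d p * (starRingEnd ℂ) (d q)) * Q p q := by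
    rw [← intervalIntegral.integral_ofReal]
    rw [intervalIntegral.integral_congr (g := fun t : ℝ =>
      ∑ p ∈ S, ∑ q ∈ S, (d p * (starRingEnd ℂ) (d q)) * E p q t) (fun t _ => hDconj t)]
    rw [intervalIntegral.integral_finset_sum (fun p _ =>
      (continuous_finset_sum _ (fun q _ => hcont p q)).intervalIntegrable _ _)]
    apply Finset.sum_congr rfl
    intro p _
    rw [intervalIntegral.integral_finset_sum (fun q _ => (hcont p q).intervalIntegrable _ _)]
    apply Finset.sum_congr rfl
    intro q _
    rw [intervalIntegral.integral_const_mul]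
  have habs : (∫ t in T..(2*T), ‖D t‖^2)
      ≤ ∑ p ∈ S, ∑ q ∈ S, ‖(d p * (starRingEnd ℂ) (d q)) * Q p q‖ := by
    have h1 : (∫ t in T..(2*T), ‖D t‖^2)
        = ‖(((∫ t in T..(2*T), ‖D t‖^2 : ℝ)):ℂ)‖ := by
      rw [Complex.norm_real, Real.norm_eq_abs, _root_.abs_of_nonneg hnn]
    rw [h1, hcast]
    refine le_trans (norm_sum_le _ _) (Finset.sum_le_sum fun p _ => ?_)
    exact norm_sum_le _ _
  -- weights
  set W : ℕ → ℝ := fun p => Real.log p / p with hWdef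
  set y2 : ℕ → ℝ := fun p => ‖c p‖^2 * W p with hy2def
  set G : ℕ → ℕ → ℝ := fun p q => y2 p * (W q * Real.sqrt (Rfun p q)) with hGdef
  set odt : ℕ → ℕ → ℝ := fun p q => (Real.sqrt T/2) * (G p q + G q p) with hodtdef
  set dg : ℕ → ℕ → ℝ := fun p q => if p = q then ‖d p‖^2 * T else 0 with hdgdef
  have hWnn : ∀ p ∈ S, 0 ≤ W p := by
    intro p hp
    have h2 := (hSfact p hp).2.2.1
    have h1 : (1:ℝ) ≤ p := by exact_mod_cast Nat.one_le_of_lt h2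
    rw [hWdef]
    have := Real.log_nonneg h1
    positivity
  have hy2nn : ∀ p ∈ S, 0 ≤ y2 p := by
    intro p hp
    rw [hy2def]
    simp only []
    have := hWnn p hp
    positivity
  have hdle : ∀ p ∈ S, ‖d p‖ ≤ ‖c p‖ * W p := by
    intro p hp
    rw [hddef]
    simp only [norm_mul, Complex.norm_real, Real.norm_eq_abs]
    have h1 : |gmu μ (2*Real.log p/L)| ≤ 1 :=
      abs_le.2 ⟨by linarith [hg0 (2*Real.log p/L)], hg1 _⟩
    have h2 : |Real.log p / (p:ℝ)| = W p := by
      rw [hWdef]; exact _root_.abs_of_nonneg (hWnn p hp)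
    rw [h2]
    calc ‖c p‖ * |gmu μ (2*Real.log p/L)| * W p
        ≤ ‖c p‖ * 1 * W p := by
          apply mul_le_mul_of_nonneg_right
            (mul_le_mul_of_nonneg_left h1 (norm_nonneg _)) (hWnn p hp)
      _ = ‖c p‖ * W p := by ring
  have hxy : ∀ p ∈ S, ∀ q ∈ S,
      ‖d p‖ * ‖d q‖ ≤ (y2 p * W q + y2 q * W p)/2 := by
    intro p hp q hq
    have h1 := hdle p hp
    have h2 := hdle q hq
    have hWp := hWnn p hp
    have hWq := hWnn q hq
    have hprod : (y2 p * W q) * (y2 q * W p)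
        = ((‖c p‖ * W p) * (‖c q‖ * W q))^2 := by
      rw [hy2def]; simp only []; ring
    have hs0 : 0 ≤ (‖c p‖ * W p) * (‖c q‖ * W q) := by positivity
    have hamgm := MVB.amgm_of_sq (A := y2 p * W q) (B := y2 q * W p)
      (by positivity) (by positivity) hs0 hprod
    calc ‖d p‖ * ‖d q‖
        ≤ (‖c p‖ * W p) * (‖c q‖ * W q) :=
          mul_le_mul h1 h2 (norm_nonneg _) (by positivity)
      _ ≤ (y2 p * W q + y2 q * W p)/2 := hamgm
  -- Q bounds
  have hQT : ∀ p q : ℕ, ‖Q p q‖ ≤ T := by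
    intro p q
    rw [hQdef, hEdef]
    simp only []
    exact qnorm_le_T hT0.le
  have hQfar : ∀ p ∈ S, ∀ q ∈ S, p ≠ q →
      ‖Q p q‖ ≤ Real.sqrt T * Real.sqrt (Rfun p q) := by
    intro p hp q hq hne
    have hp2 := (hSfact p hp).2.2.1
    have hq2 := (hSfact q hq).2.2.1
    have hp0 : (0:ℝ) < p := by
      have : 0 < p := by omega
      exact_mod_cast this
    have hq0 : (0:ℝ) < q := by
      have : 0 < q := by omega
      exact_mod_cast this
    -- the key gap bound: 1/|log q - log p| ≤ Rfun p q, and Rfun > 0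
    have hgap : |Real.log q - Real.log p| * Rfun p q ≥ 1 ∧ 0 < Rfun p q := by
      rcases lt_or_gt_of_ne hne with h | h
      · -- p < q
        have hpq : (p:ℝ) < q := by exact_mod_cast h
        have hR : Rfun p q = (q:ℝ)/((q:ℝ)-p) := by
          unfold Rfun; rw [max_eq_right hpq.le, min_eq_left hpq.le]
        have hd0 : (0:ℝ) < (q:ℝ)-p := by linarith
        have hR0 : 0 < Rfun p q := by rw [hR]; positivity
        have hlg := MVB.loggap hp0 hpq
        have habs' : |Real.log q - Real.log p| = Real.log q - Real.log p := by
          apply _root_.abs_of_nonneg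
          have := Real.log_le_log hp0 hpq.le
          linarith
        constructor
        · rw [habs', hR, ge_iff_le, ← div_le_iff₀ (by positivity)]
          rw [div_div_eq_mul_div, one_mul, div_le_iff₀ hq0]
          calc (q:ℝ) - p = ((q:ℝ)-p)/q * q := by field_simp
            _ ≤ (Real.log q - Real.log p) * q :=
              mul_le_mul_of_nonneg_right hlg hq0.le
        · exact hR0
      · -- q < p
        have hqp : (q:ℝ) < p := by exact_mod_cast h
        have hR : Rfun p q = (p:ℝ)/((p:ℝ)-q) := by
          unfold Rfun; rw [max_eq_left hqp.le, min_eq_right hqp.le]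
        have hd0 : (0:ℝ) < (p:ℝ)-q := by linarith
        have hR0 : 0 < Rfun p q := by rw [hR]; positivity
        have hlg := MVB.loggap hq0 hqp
        have habs' : |Real.log q - Real.log p| = Real.log p - Real.log q := by
          rw [abs_sub_comm]
          apply _root_.abs_of_nonneg
          have := Real.log_le_log hq0 hqp.le
          linarith
        constructor
        · rw [habs', hR, ge_iff_le, ← div_le_iff₀ (by positivity)]
          rw [div_div_eq_mul_div, one_mul, div_le_iff₀ hp0]
          calc (p:ℝ) - q = ((p:ℝ)-q)/p * p := by field_simp
            _ ≤ (Real.log p - Real.log q) * p :=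
              mul_le_mul_of_nonneg_right hlg hp0.le
        · exact hR0
    obtain ⟨hgap1, hR0g⟩ := hgap
    set θ : ℝ := 2*(Real.log q - Real.log p) with hθdef
    have hθne : θ ≠ 0 := by
      intro h0
      have hlog0 : Real.log q - Real.log p = 0 := by
        rw [hθdef] at h0; linarith
      have : |Real.log q - Real.log p| * Rfun p q = 0 := by rw [hlog0]; simp
      rw [this] at hgap1
      norm_num at hgap1
    have hb1 : ‖Q p q‖ ≤ T := by
      rw [hQdef, hEdef]; simp only []; exact qnorm_le_T hT0.le
    have hb2 : ‖Q p q‖ ≤ 2/|θ| := by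
      rw [hQdef, hEdef]; simp only []; exact qnorm_le_inv hθne
    have hinv : 2/|θ| ≤ Rfun p q := by
      have hθabs : |θ| = 2*|Real.log q - Real.log p| := by
        rw [hθdef, abs_mul]; norm_num
      have hDpos : 0 < |Real.log q - Real.log p| := by
        rcases (abs_nonneg (Real.log q - Real.log p)).eq_or_lt with h0 | h0
        · exfalso
          rw [← h0, zero_mul] at hgap1
          exact absurd hgap1 (by norm_num)
        · exact h0
      rw [hθabs]
      rw [div_le_iff₀ (by linarith : (0:ℝ) < 2*|Real.log q - Real.log p|)]
      calc (2:ℝ) = 2*1 := by ring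
        _ ≤ 2*(|Real.log q - Real.log p| * Rfun p q) := by linarith [hgap1]
        _ = Rfun p q * (2*|Real.log q - Real.log p|) := by ring
    have hQR : ‖Q p q‖ ≤ Rfun p q := le_trans hb2 hinv
    calc ‖Q p q‖ = Real.sqrt (‖Q p q‖ * ‖Q p q‖) :=
          (Real.sqrt_mul_self (norm_nonneg _)).symm
      _ ≤ Real.sqrt (T * Rfun p q) :=
          Real.sqrt_le_sqrt (mul_le_mul hb1 hQR (norm_nonneg _) hT0.le)
      _ = Real.sqrt T * Real.sqrt (Rfun p q) := Real.sqrt_mul hT0.le _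
  -- per-pair bound
  have hpair : ∀ p ∈ S, ∀ q ∈ S,
      ‖(d p * (starRingEnd ℂ) (d q)) * Q p q‖ ≤ dg p q + odt p q := by
    intro p hp q hq
    rw [norm_mul, norm_mul, Complex.norm_conj]
    by_cases he : p = q
    · subst he
      rw [hdgdef]
      simp only [if_true, eq_self_iff_true]
      have h1 : ‖d p‖ * ‖d p‖ * ‖Q p p‖
          ≤ ‖d p‖^2 * T := by
        rw [sq]
        exact mul_le_mul_of_nonneg_left (hQT p p) (by positivity)
      have h2 : 0 ≤ odt p p := by
        rw [hodtdef, hGdef]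
        simp only []
        have := hy2nn p hp
        have := hWnn p hp
        have := Real.sqrt_nonneg (Rfun p p)
        have := Real.sqrt_nonneg T
        positivity
      linarith
    · rw [hdgdef]
      simp only [if_neg he]
      rw [zero_add]
      have hhalfnn : 0 ≤ (y2 p * W q + y2 q * W p)/2 := by
        have := hy2nn p hp; have := hy2nn q hq
        have := hWnn p hp; have := hWnn q hq
        positivity
      calc ‖d p‖ * ‖d q‖ * ‖Q p q‖
          ≤ ((y2 p * W q + y2 q * W p)/2) * (Real.sqrt T * Real.sqrt (Rfun p q)) :=
            mul_le_mul (hxy p hp q hq) (hQfar p hp q hq he) (norm_nonneg _) hhalfnn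
        _ = odt p q := by
            rw [hodtdef, hGdef]
            simp only []
            rw [Rfun_symm q p]
            ring
  -- diagonal sum
  have hdle64 : ∀ p ∈ S, ‖d p‖^2 ≤ 64*C^2*(1/(p:ℝ)^((5:ℝ)/4)) := by
    intro p hp
    obtain ⟨hprime, hle, hp2, hpN, hplog⟩ := hSfact p hp
    have hp0 : (0:ℝ) < p := by
      have : 0 < p := by omega
      exact_mod_cast this
    have hclog : ‖c p‖ ≤ C * (p:ℝ)^((1:ℝ)/4) := by
      have hm1 : 1 ≤ p^2 := by nlinarith
      have h1 := hCa (p^2) hm1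
      have h2 := hCb (p^2) hm1
      have hcast : ((p^2 : ℕ):ℝ) = (p:ℝ)^(2:ℕ) := by push_cast; ring
      have hrw : ((p^2:ℕ):ℝ)^((1:ℝ)/8) = (p:ℝ)^((1:ℝ)/4) := by
        rw [hcast, ← Real.rpow_natCast (p:ℝ) 2, ← Real.rpow_mul hp0.le]
        norm_num
      have hrpow0 : (0:ℝ) ≤ ((p^2:ℕ):ℝ)^((1:ℝ)/8) := Real.rpow_nonneg (by positivity) _
      calc ‖c p‖ ≤ ‖a (p^2)‖ + ‖b (p^2)‖ := by
            rw [hcdef]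
            exact norm_sub_le (a (p^2)) (b (p^2))
        _ ≤ Ca * ((p^2:ℕ):ℝ)^((1:ℝ)/8) + Cb * ((p^2:ℕ):ℝ)^((1:ℝ)/8) := add_le_add h1 h2
        _ ≤ |Ca| * ((p^2:ℕ):ℝ)^((1:ℝ)/8) + |Cb| * ((p^2:ℕ):ℝ)^((1:ℝ)/8) := by
            apply add_le_add <;>
              exact mul_le_mul_of_nonneg_right (le_abs_self _) hrpow0
        _ = C * ((p^2:ℕ):ℝ)^((1:ℝ)/8) := by rw [hCdef]; ring
        _ = C * (p:ℝ)^((1:ℝ)/4) := by rw [hrw]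
    have hlog8 : Real.log p ≤ 8*(p:ℝ)^((1:ℝ)/8) := by
      have := Real.log_le_rpow_div (x := (p:ℝ)) (by positivity) (show (0:ℝ) < 1/8 by norm_num)
      calc Real.log p ≤ (p:ℝ)^((1:ℝ)/8)/(1/8) := this
        _ = 8*(p:ℝ)^((1:ℝ)/8) := by ring
    have hWle : W p ≤ 8*(p:ℝ)^((1:ℝ)/8)/(p:ℝ) := by
      rw [hWdef]
      exact (div_le_div_iff_of_pos_right hp0).2 hlog8
    have h8 : ‖d p‖ ≤ 8*C*((p:ℝ)^((3:ℝ)/8)/(p:ℝ)) := by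
      calc ‖d p‖ ≤ ‖c p‖ * W p := hdle p hp
        _ ≤ (C * (p:ℝ)^((1:ℝ)/4)) * (8*(p:ℝ)^((1:ℝ)/8)/(p:ℝ)) :=
            mul_le_mul hclog hWle (hWnn p hp) (by positivity)
        _ = 8*C*(((p:ℝ)^((1:ℝ)/4)*(p:ℝ)^((1:ℝ)/8))/(p:ℝ)) := by ring
        _ = 8*C*((p:ℝ)^((3:ℝ)/8)/(p:ℝ)) := by
            rw [← Real.rpow_add hp0]
            norm_num
    have hsq' : ‖d p‖^2 ≤ (8*C*((p:ℝ)^((3:ℝ)/8)/(p:ℝ)))^2 :=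
      pow_le_pow_left₀ (norm_nonneg _) h8 2
    have e1 : ((p:ℝ)^((3:ℝ)/8))^2 = (p:ℝ)^((3:ℝ)/4) := by
      rw [← Real.rpow_natCast ((p:ℝ)^((3:ℝ)/8)) 2, ← Real.rpow_mul hp0.le]
      norm_num
    have e2 : (p:ℝ)^((3:ℝ)/4)/((p:ℝ)^(2:ℕ)) = 1/(p:ℝ)^((5:ℝ)/4) := by
      rw [← Real.rpow_natCast (p:ℝ) 2, ← Real.rpow_sub hp0]
      rw [show (3:ℝ)/4 - ((2:ℕ):ℝ) = -((5:ℝ)/4) by norm_num]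
      rw [Real.rpow_neg hp0.le, one_div]
    have e3 : (8*C*((p:ℝ)^((3:ℝ)/8)/(p:ℝ)))^2 = 64*C^2*(1/(p:ℝ)^((5:ℝ)/4)) := by
      have : (8*C*((p:ℝ)^((3:ℝ)/8)/(p:ℝ)))^2
          = 64*C^2*(((p:ℝ)^((3:ℝ)/8))^2/((p:ℝ)^(2:ℕ))) := by ring
      rw [this, e1, e2]
    linarith [hsq'.trans_eq e3]
  have hdgsum : ∑ p ∈ S, ∑ q ∈ S, dg p q ≤ 64*C^2*Z*T := by
    have h1 : ∀ p ∈ S, ∑ q ∈ S, dg p q = ‖d p‖^2 * T := by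
      intro p hp
      rw [hdgdef]
      simp only []
      rw [Finset.sum_ite_eq S p (fun _ => ‖d p‖^2 * T)]
      rw [if_pos hp]
    calc ∑ p ∈ S, ∑ q ∈ S, dg p q = ∑ p ∈ S, ‖d p‖^2 * T :=
          Finset.sum_congr rfl h1
      _ = (∑ p ∈ S, ‖d p‖^2) * T := by rw [Finset.sum_mul]
      _ ≤ (64*C^2*Z) * T := by
          apply mul_le_mul_of_nonneg_right _ hT0.le
          calc ∑ p ∈ S, ‖d p‖^2
              ≤ ∑ p ∈ S, 64*C^2*(1/(p:ℝ)^((5:ℝ)/4)) := Finset.sum_le_sum hdle64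
            _ = 64*C^2 * ∑ p ∈ S, (1/(p:ℝ)^((5:ℝ)/4)) := by rw [Finset.mul_sum]
            _ ≤ 64*C^2 * Z := by
                apply mul_le_mul_of_nonneg_left _ (by positivity)
                rw [hZdef]
                exact Summable.sum_le_tsum S (fun i _ => by positivity) hZsum
            _ = 64*C^2*Z := by ring
      _ = 64*C^2*Z*T := by ring
  -- off-diagonal sum
  have hGsum : ∀ p ∈ S, ∑ q ∈ S, G p q ≤ y2 p * (8*L^2) := by
    intro p hp
    rw [hGdef]
    simp only []
    rw [← Finset.mul_sum]
    exact mul_le_mul_of_nonneg_left (inner_sum_bound hL hSprop hlogN hp) (hy2nn p hp)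
  have hodsum : ∑ p ∈ S, ∑ q ∈ S, odt p q ≤ Real.sqrt T * (8*L^2) * (∑ p ∈ S, y2 p) := by
    have hswap : ∑ p ∈ S, ∑ q ∈ S, G q p = ∑ p ∈ S, ∑ q ∈ S, G p q := Finset.sum_comm
    calc ∑ p ∈ S, ∑ q ∈ S, odt p q
        = (Real.sqrt T/2) * ((∑ p ∈ S, ∑ q ∈ S, G p q) + (∑ p ∈ S, ∑ q ∈ S, G q p)) := by
          rw [hodtdef]
          simp only [mul_add, Finset.mul_sum, Finset.sum_add_distrib]
      _ = Real.sqrt T * (∑ p ∈ S, ∑ q ∈ S, G p q) := by rw [hswap]; ring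
      _ ≤ Real.sqrt T * ((∑ p ∈ S, y2 p) * (8*L^2)) := by
          apply mul_le_mul_of_nonneg_left _ (Real.sqrt_nonneg T)
          calc ∑ p ∈ S, ∑ q ∈ S, G p q ≤ ∑ p ∈ S, y2 p * (8*L^2) :=
                Finset.sum_le_sum hGsum
            _ = (∑ p ∈ S, y2 p) * (8*L^2) := by rw [Finset.sum_mul]
      _ = Real.sqrt T * (8*L^2) * (∑ p ∈ S, y2 p) := by ring
  -- the square-sum bound
  set xh : ℝ := max (L/2) 2 with hxhdef
  have hY0 : 0 ≤ ∑ p ∈ S, y2 p := Finset.sum_nonneg hy2nn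
  have hYle : ∑ p ∈ S, y2 p ≤ |K₁| * Real.exp ((ε/8) * xh / Real.log xh) := by
    have hLxh : L/2 ≤ xh := le_max_left _ _
    have hPxh : P ≤ Real.exp xh := by
      rw [hPdef]; exact Real.exp_le_exp.2 hLxh
    have hsub : ∑ p ∈ S, y2 p ≤ primeSquareSum a b xh := by
      unfold primeSquareSum
      have hform : ∀ p ∈ S, y2 p = ‖a (p^2) - b (p^2)‖^2 * Real.log p / p := by
        intro p hp
        rw [hy2def, hWdef, hcdef]
        simp only []
        ring
      rw [Finset.sum_congr rfl hform]
      apply Finset.sum_le_sum_of_subset_of_nonneg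
      · intro p hp
        obtain ⟨hprime, hle, hp2, hpN, hplog⟩ := hSfact p hp
        refine Finset.mem_filter.2 ⟨Finset.mem_range.2 ?_, hprime, le_trans hle hPxh⟩
        have h1 : N ≤ ⌈Real.exp xh⌉₊ := Nat.ceil_le_ceil hPxh
        omega
      · intro p hp _
        have hp2 := (Finset.mem_filter.1 hp).2.1.two_le
        have h1 : (1:ℝ) ≤ p := by exact_mod_cast Nat.one_le_of_lt hp2
        have := Real.log_nonneg h1
        positivity
    have h2xh : (2:ℝ) ≤ xh := le_max_right _ _
    calc ∑ p ∈ S, y2 p ≤ primeSquareSum a b xh := hsub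
      _ ≤ K₁ * Real.exp ((ε/8) * xh / Real.log xh) := hK₁ xh h2xh
      _ ≤ |K₁| * Real.exp ((ε/8) * xh / Real.log xh) :=
          mul_le_mul_of_nonneg_right (le_abs_self K₁) (Real.exp_pos _).le
  -- final numeric assembly
  set Y : ℝ := ∑ p ∈ S, y2 p with hYdef
  have hEYsq : Real.sqrt T * (8*L^2) * Y ≤ T/2 + 32*L^4*Y^2 := by
    nlinarith [sq_nonneg (Real.sqrt T - 8*L^2*Y), Real.sq_sqrt hT0.le]
  have hYsq : 32*L^4*Y^2 ≤ 32*K₁^2*K₂*Real.exp (ε*L/Real.log L) := by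
    have hE2 : (Real.exp ((ε/8)*xh/Real.log xh))^2 = Real.exp ((ε/4)*xh/Real.log xh) := by
      rw [← Real.exp_nat_mul]
      congr 1
      push_cast
      ring
    have h1 : Y^2 ≤ K₁^2 * Real.exp ((ε/4)*xh/Real.log xh) := by
      calc Y^2 ≤ (|K₁| * Real.exp ((ε/8)*xh/Real.log xh))^2 := pow_le_pow_left₀ hY0 hYle 2
        _ = K₁^2 * (Real.exp ((ε/8)*xh/Real.log xh))^2 := by rw [mul_pow, _root_.sq_abs]
        _ = K₁^2 * Real.exp ((ε/4)*xh/Real.log xh) := by rw [hE2]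
    have h2 : L^4 * Real.exp ((ε/4)*xh/Real.log xh) ≤ K₂ * Real.exp (ε*L/Real.log L) := by
      rw [hxhdef]
      exact hK₂ L hL
    calc 32*L^4*Y^2 ≤ 32*L^4*(K₁^2 * Real.exp ((ε/4)*xh/Real.log xh)) := by
          apply mul_le_mul_of_nonneg_left h1 (by positivity)
      _ = 32*K₁^2*(L^4 * Real.exp ((ε/4)*xh/Real.log xh)) := by ring
      _ ≤ 32*K₁^2*(K₂ * Real.exp (ε*L/Real.log L)) := by
          apply mul_le_mul_of_nonneg_left h2 (by positivity)
      _ = 32*K₁^2*K₂*Real.exp (ε*L/Real.log L) := by ring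
  have hexp0 : (0:ℝ) ≤ Real.exp (ε*L/Real.log L) := (Real.exp_pos _).le
  calc (∫ t in T..(2*T), ‖primeDirichletPoly a b μ L t‖^2)
      = ∫ t in T..(2*T), ‖D t‖^2 :=
        intervalIntegral.integral_congr (fun t _ => by rw [hpoly t])
    _ ≤ ∑ p ∈ S, ∑ q ∈ S, ‖(d p * (starRingEnd ℂ) (d q)) * Q p q‖ := habs
    _ ≤ ∑ p ∈ S, ∑ q ∈ S, (dg p q + odt p q) :=
        Finset.sum_le_sum (fun p hp => Finset.sum_le_sum (fun q hq => hpair p hp q hq))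
    _ = (∑ p ∈ S, ∑ q ∈ S, dg p q) + (∑ p ∈ S, ∑ q ∈ S, odt p q) := by
        simp only [Finset.sum_add_distrib]
    _ ≤ 64*C^2*Z*T + Real.sqrt T * (8*L^2) * Y := add_le_add hdgsum hodsum
    _ ≤ 64*C^2*Z*T + (T/2 + 32*L^4*Y^2) := add_le_add_right hEYsq _
    _ ≤ 64*C^2*Z*T + T/2 + 32*K₁^2*K₂*Real.exp (ε*L/Real.log L) := by linarith [hYsq]
    _ ≤ (64*C^2*Z + 1 + 32*K₁^2*K₂) * (T + Real.exp (ε*L/Real.log L)) := by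
        have h1 : 0 ≤ 64*C^2*Z*Real.exp (ε*L/Real.log L) := by positivity
        have h2 : 0 ≤ 32*K₁^2*K₂*T := by positivity
        nlinarith [hT0, hexp0, hZ0, hC0]

end
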